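/- Fix integers d ≥ 1, n ≥ 1 and a vector t = (t₁,…,t_d) ∈ ℝ^d with ‖t‖ ≠ 0. For k ≥ 0 let M_k be the (finite-dimensional, Euclidean) space of real arrays Ψ = {ψ_{i₁…i_k}}, 1 ≤ i_j ≤ d, symmetric under all permutations of the indices (M₀ = ℝ). Define T_k : M_k → M_{k−1} by (T_kΨ)_{i₁…i_{k−1}} = Σ_{j=1}^d ψ_{i₁…i_{k−1}j} t_j, and S_k : M_k → M_{k+1} by (S_kΨ)_{i₁…i_{k+1}} = Σ_{j=1}^{k+1} ψ_{i₁…î_j…i_{k+1}} t_{i_j} (the hat denotes omission of the index i_j). Then: (i) T_{k+1}S_k = ‖t‖² I_k + S_{k−1}T_k on M_k for all k ≥ 1; (ii) for every F ∈ M_{n−1}, the element Ψ_n = ‖t‖^{−2} Σ_{p=1}^{n} (−1)^{p+1} (p!)^{−1} ‖t‖^{−2(p−1)} S^p T^{p−1} F (where S^p T^{p−1}F means S_{n−1}∘…∘S_{n−p}∘T_{n−p+1}∘…∘T_{n−1} applied to F, i.e. p−1 annihilations followed by p creations) satisfies T_n Ψ_n = F; (iii) the resulting solution operator R_{n−1}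 : M_{n−1} → M_n, F ↦ Ψ_n, satisfies ‖R_{n−1}‖ ≤ C_n ‖t‖^{−1} with a constant C_n depending only on n and d. -/

import Mathlib

noncomputable section

/-- The space `M_k^{(d)}` of real arrays indexed by multi-indices `(i₁,…,i_k)`,
`1 ≤ i_j ≤ d`. -/
def MArr (d k : ℕ) : Type := (Fin k → Fin d) → ℝ

instance (d k : ℕ) : AddCommGroup (MArr d k) := Pi.addCommGroup
instance (d k : ℕ) : Module ℝ (MArr d k) := Pi.Function.module _ _ _

/-- Symmetry of an array under all permutations of its indices. -/
def MSymm {d k : ℕ} (Ψ : MArr d k) : Prop :=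
  ∀ σ : Equiv.Perm (Fin k), ∀ idx : Fin k → Fin d, Ψ (idx ∘ σ) = Ψ idx

/-- `‖t‖²`. -/
def tsq {d : ℕ} (t : Fin d → ℝ) : ℝ := ∑ i, t i ^ 2

/-- The Euclidean norm of an array. -/
def arrNorm {d k : ℕ} (Ψ : MArr d k) : ℝ := Real.sqrt (∑ idx : Fin k → Fin d, Ψ idx ^ 2)

/-- The annihilation operator `T_k : M_k → M_{k-1}`,
`(TΨ)_{i₁…i_{k-1}} = Σ_j ψ_{i₁…i_{k-1} j} t_j`. -/
def Tann {d k : ℕ} (t : Fin d → ℝ) (Ψ : MArr d (k + 1)) : MArr d k :=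
  fun idx => ∑ j : Fin d, Ψ (Fin.snoc idx j) * t j

/-- The creation operator `S_k : M_k → M_{k+1}`,
`(SΨ)_{i₁…i_{k+1}} = Σ_{j=1}^{k+1} ψ_{i₁…î_j…i_{k+1}} t_{i_j}`. -/
def Scre {d k : ℕ} (t : Fin d → ℝ) (Ψ : MArr d k) : MArr d (k + 1) :=
  fun idx => ∑ j : Fin (k + 1), Ψ (idx ∘ j.succAbove) * t (idx j)

/-- Iterated annihilation `T^p : M_{k+p} → M_k`. -/
def Titer {d k : ℕ} (t : Fin d → ℝ) : (p : ℕ) → MArr d (k + p) → MArr d k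
  | 0, Ψ => Ψ
  | p + 1, Ψ => Titer t p (Tann t Ψ)

/-- Iterated creation `S^p : M_k → M_{k+p}`. -/
def Siter {d k : ℕ} (t : Fin d → ℝ) : (p : ℕ) → MArr d k → MArr d (k + p)
  | 0, Ψ => Ψ
  | p + 1, Ψ => Scre t (Siter t p Ψ)

/-- Re-indexing an array along an equality of degrees. -/
def castArr {d k k' : ℕ} (h : k = k') (Ψ : MArr d k) : MArr d k' :=
  fun idx => Ψ fun i => idx (Fin.cast h i)

/-- The solution operator `R_{n-1} : M_{n-1} → M_n`,
`R F = Σ_{p=1}^n (-1)^{p+1} (p!)⁻¹ ‖t‖^{-2p} S^p T^{p-1} F`. -/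
def Rop {d : ℕ} (n : ℕ) (t : Fin d → ℝ) (F : MArr d (n - 1)) : MArr d n :=
  ∑ p ∈ (Finset.Icc 1 n).attach,
    ((-1 : ℝ) ^ ((p : ℕ) + 1) * ((Nat.factorial (p : ℕ) : ℝ))⁻¹ * (tsq t ^ (p : ℕ))⁻¹) •
      castArr (show (n - (p : ℕ)) + (p : ℕ) = n by
          have := Finset.mem_Icc.mp p.2; omega)
        (Siter t (p : ℕ)
          (Titer (k := n - (p : ℕ)) t ((p : ℕ) - 1)
            (castArr (show n - 1 = (n - (p : ℕ)) + ((p : ℕ) - 1) by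
                have := Finset.mem_Icc.mp p.2; omega) F)))

-- ### auxiliary lemmas

section Aux

variable {d : ℕ} (t : Fin d → ℝ)

@[simp] lemma castArr_self {k : ℕ} (h : k = k) (Ψ : MArr d k) : castArr h Ψ = Ψ := rfl

lemma castArr_castArr {a b c : ℕ} (h1 : a = b) (h2 : b = c) (Ψ : MArr d a) :
    castArr h2 (castArr h1 Ψ) = castArr (h1.trans h2) Ψ := by subst h1 h2; rfl

lemma castArr_proofIrrel {a b : ℕ} (h1 h2 : a = b) (Ψ : MArr d a) :
    castArr h1 Ψ = castArr h2 Ψ := rfl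

lemma Tann_castArr {a b : ℕ} (h1 : a + 1 = b + 1) (h2 : a = b) (Ψ : MArr d (a + 1)) :
    Tann t (castArr h1 Ψ) = castArr h2 (Tann t Ψ) := by subst h2; rfl

lemma Scre_castArr {a b : ℕ} (h1 : a = b) (h2 : a + 1 = b + 1) (Ψ : MArr d a) :
    Scre t (castArr h1 Ψ) = castArr h2 (Scre t Ψ) := by subst h1; rfl

lemma Siter_castArr {a b : ℕ} (p : ℕ) (h1 : a = b) (h2 : a + p = b + p) (Ψ : MArr d a) :
    Siter t p (castArr h1 Ψ) = castArr h2 (Siter t p Ψ) := by subst h1; rfl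

lemma Titer_castArr {a b : ℕ} (p : ℕ) (h1 : a + p = b + p) (h2 : a = b) (Ψ : MArr d (a + p)) :
    Titer t p (castArr h1 Ψ) = castArr h2 (Titer t p Ψ) := by subst h2; rfl

lemma castArr_smul {a b : ℕ} (h : a = b) (c : ℝ) (Ψ : MArr d a) :
    castArr h (c • Ψ) = c • castArr h Ψ := rfl

lemma castArr_add {a b : ℕ} (h : a = b) (Ψ Φ : MArr d a) :
    castArr h (Ψ + Φ) = castArr h Ψ + castArr h Φ := rfl

lemma castArr_sum {a b : ℕ} (h : a = b) {ι : Type*} (s : Finset ι) (f : ι → MArr d a) :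
    castArr h (∑ i ∈ s, f i) = ∑ i ∈ s, castArr h (f i) := by
  subst h; simp only [castArr_self]

end Aux

section Aux2

variable {d : ℕ} (t : Fin d → ℝ)

lemma MArr_smul_apply {k : ℕ} (c : ℝ) (Ψ : MArr d k) (idx : Fin k → Fin d) :
    (c • Ψ) idx = c * Ψ idx := rfl

lemma MArr_add_apply {k : ℕ} (Ψ Φ : MArr d k) (idx : Fin k → Fin d) :
    (Ψ + Φ) idx = Ψ idx + Φ idx := rfl

lemma MArr_sum_apply {k : ℕ} {ι : Type*} (s : Finset ι) (f : ι → MArr d k)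
    (idx : Fin k → Fin d) : (∑ i ∈ s, f i) idx = ∑ i ∈ s, f i idx := by
  classical
  induction s using Finset.induction_on with
  | empty => rfl
  | insert _ _ h ih => rw [Finset.sum_insert h, Finset.sum_insert h, MArr_add_apply, ih]

lemma Tann_smul {k : ℕ} (c : ℝ) (Ψ : MArr d (k + 1)) :
    Tann t (c • Ψ) = c • Tann t Ψ := by
  funext idx
  simp only [Tann, MArr_smul_apply, Finset.mul_sum]
  exact Finset.sum_congr rfl fun j _ => by ring

lemma Tann_add {k : ℕ} (Ψ Φ : MArr d (k + 1)) :
    Tann t (Ψ + Φ) = Tann t Ψ + Tann t Φ := by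
  funext idx
  simp only [Tann, MArr_add_apply, ← Finset.sum_add_distrib]
  exact Finset.sum_congr rfl fun j _ => by ring

lemma Tann_sum {k : ℕ} {ι : Type*} (s : Finset ι) (f : ι → MArr d (k + 1)) :
    Tann t (∑ i ∈ s, f i) = ∑ i ∈ s, Tann t (f i) := by
  classical
  induction s using Finset.induction_on with
  | empty =>
    funext idx
    simp [Tann, MArr_sum_apply]
  | insert _ _ h ih => rw [Finset.sum_insert h, Finset.sum_insert h, Tann_add, ih]

lemma Scre_smul {k : ℕ} (c : ℝ) (Ψ : MArr d k) :
    Scre t (c • Ψ) = c • Scre t Ψ := by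
  funext idx
  simp only [Scre, MArr_smul_apply, Finset.mul_sum]
  exact Finset.sum_congr rfl fun j _ => by ring

lemma Scre_add {k : ℕ} (Ψ Φ : MArr d k) :
    Scre t (Ψ + Φ) = Scre t Ψ + Scre t Φ := by
  funext idx
  simp only [Scre, MArr_add_apply, ← Finset.sum_add_distrib]
  exact Finset.sum_congr rfl fun j _ => by ring

/-- The key index identity. -/
lemma snoc_succAbove_eq {k : ℕ} (idx : Fin (k + 1) → Fin d) (j : Fin d) (i : Fin (k + 1)) :
    (Fin.snoc idx j : Fin (k + 2) → Fin d) ∘ (i.castSucc).succAbove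
      = Fin.snoc (idx ∘ i.succAbove) j := by
  funext l
  induction l using Fin.lastCases with
  | last =>
    simp only [Function.comp_apply, Fin.snoc_last]
    rw [Fin.succAbove_castSucc_of_le _ _ (Fin.le_last i), Fin.succ_last, Fin.snoc_last]
  | cast l' =>
    simp only [Function.comp_apply, Fin.snoc_castSucc]
    rw [Fin.castSucc_succAbove_castSucc, Fin.snoc_castSucc]

/-- Unconditional commutation relation `T S = ‖t‖² + S T` on `M_{k+1}`. -/
lemma comm_TS {k : ℕ} (Ψ : MArr d (k + 1)) :
    Tann t (Scre t Ψ) = tsq t • Ψ + Scre t (Tann t Ψ) := by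
  funext idx
  simp only [Tann, Scre, MArr_add_apply, MArr_smul_apply]
  have step : ∀ j : Fin d,
      (∑ m : Fin (k + 2), Ψ ((Fin.snoc idx j : Fin (k+2) → Fin d) ∘ m.succAbove)
          * t ((Fin.snoc idx j : Fin (k+2) → Fin d) m)) * t j
        = Ψ idx * t j * t j
          + ∑ i : Fin (k + 1), Ψ (Fin.snoc (idx ∘ i.succAbove) j) * t (idx i) * t j := by
    intro j
    rw [Fin.sum_univ_castSucc (n := k + 1)]
    rw [add_mul, Finset.sum_mul, add_comm]
    congr 1
    · rw [Fin.succAbove_last, Fin.snoc_last, Fin.snoc_comp_castSucc]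
    · exact Finset.sum_congr rfl fun i _ => by
        rw [snoc_succAbove_eq, Fin.snoc_castSucc]
  rw [Finset.sum_congr rfl fun j _ => step j, Finset.sum_add_distrib]
  congr 1
  · rw [tsq, Finset.sum_mul]
    exact Finset.sum_congr rfl fun j _ => by ring
  · rw [Finset.sum_comm]
    exact Finset.sum_congr rfl fun i _ => by
      rw [Finset.sum_mul]
      exact Finset.sum_congr rfl fun j _ => by ring

/-- On `M₀`, `T S = ‖t‖²`. -/
lemma comm_TS0 (Ψ : MArr d 0) : Tann t (Scre t Ψ) = tsq t • Ψ := by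
  funext idx
  simp only [Tann, Scre, MArr_smul_apply]
  have : ∀ j : Fin d,
      (∑ m : Fin 1, Ψ ((Fin.snoc idx j : Fin 1 → Fin d) ∘ m.succAbove)
        * t ((Fin.snoc idx j : Fin 1 → Fin d) m)) * t j = Ψ idx * t j * t j := by
    intro j
    rw [Fin.sum_univ_one]
    have h1 : (Fin.snoc idx j : Fin 1 → Fin d) ∘ (0 : Fin 1).succAbove = idx := by
      funext l; exact l.elim0
    have h2 : (Fin.snoc idx j : Fin 1 → Fin d) 0 = j := by
      have : (0 : Fin 1) = Fin.last 0 := rfl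
      rw [this, Fin.snoc_last]
    rw [h1, h2]
  rw [Finset.sum_congr rfl fun j _ => this j, tsq, Finset.sum_mul]
  exact Finset.sum_congr rfl fun j _ => by ring

end Aux2

section Aux3

variable {d : ℕ} (t : Fin d → ℝ)

/-- `T S^{q+1} = (q+1)‖t‖² S^q + S^{q+1} T` on `M_{k+1}`. -/
lemma TS_iter {k : ℕ} (q : ℕ) (Φ : MArr d (k + 1)) (h : k + (q + 1) = (k + 1) + q) :
    Tann t (Siter t (q + 1) Φ)
      = (((q : ℕ) : ℝ) + 1) • (tsq t • Siter t q Φ)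
        + castArr h (Siter t (q + 1) (Tann t Φ)) := by
  induction q with
  | zero =>
    have e : (((0:ℕ):ℝ) + 1) • (tsq t • Siter t 0 Φ) = tsq t • Φ := by
      show (((0:ℕ):ℝ) + 1) • (tsq t • Φ) = tsq t • Φ
      norm_num
    rw [e]
    exact comm_TS t Φ
  | succ q ih =>
    refine (comm_TS t (Siter t (q + 1) Φ)).trans ?_
    rw [ih (by omega), Scre_add, Scre_smul, Scre_smul]
    have e2 : Scre t (castArr (show k + (q+1) = (k+1) + q by omega)
          (Siter t (q+1) (Tann t Φ)))
        = castArr h (Scre t (Siter t (q+1) (Tann t Φ))) :=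
      Scre_castArr t _ (by omega) _
    rw [e2]
    have e3 : ((((q+1:ℕ):ℝ)) + 1) = 1 + ((((q:ℕ):ℝ)) + 1) := by push_cast; ring
    conv_rhs => rw [e3, add_smul, one_smul]
    exact (add_assoc _ _ _).symm

/-- `T S^{q+1} = (q+1)‖t‖² S^q` on `M₀`. -/
lemma TS_iter0 (q : ℕ) (Φ : MArr d 0) :
    Tann t (Siter t (q + 1) Φ) = (((q : ℕ) : ℝ) + 1) • (tsq t • Siter t q Φ) := by
  induction q with
  | zero =>
    have e : (((0:ℕ):ℝ) + 1) • (tsq t • Siter t 0 Φ) = tsq t • Φ := by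
      show (((0:ℕ):ℝ) + 1) • (tsq t • Φ) = tsq t • Φ
      norm_num
    rw [e]
    exact comm_TS0 t Φ
  | succ q ih =>
    refine (comm_TS t (Siter t (q + 1) Φ)).trans ?_
    rw [ih, Scre_smul, Scre_smul]
    have e3 : ((((q+1:ℕ):ℝ)) + 1) = 1 + ((((q:ℕ):ℝ)) + 1) := by push_cast; ring
    conv_rhs => rw [e3, add_smul, one_smul]
    rfl

/-- Peeling the *bottom* annihilation out of `Titer`. -/
lemma Titer_comm {k : ℕ} (p : ℕ) (Ψ : MArr d (k + (p + 1))) (h : k + (p + 1) = (k + 1) + p) :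
    Titer t (p + 1) Ψ = Tann t (Titer (k := k + 1) t p (castArr h Ψ)) := by
  induction p with
  | zero => exact congrArg (Tann t) rfl
  | succ p ih =>
    show Titer t (p + 1) (Tann t Ψ) = Tann t (Titer (k := k+1) t (p+1) (castArr h Ψ))
    rw [ih (Tann t Ψ) (by omega)]
    show Tann t (Titer (k := k+1) t p (castArr (show k+(p+1) = (k+1)+p by omega) (Tann t Ψ)))
        = Tann t (Titer (k := k+1) t p (Tann t (castArr h Ψ)))
    rw [Tann_castArr t h (show k+(p+1) = (k+1)+p by omega) Ψ]

end Aux3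

section Symm

variable {d : ℕ} (t : Fin d → ℝ)

lemma MSymm_castArr {a b : ℕ} (h : a = b) {Ψ : MArr d a} (hΨ : MSymm Ψ) :
    MSymm (castArr h Ψ) := by subst h; exact hΨ

lemma MSymm_smul {k : ℕ} (c : ℝ) {Ψ : MArr d k} (hΨ : MSymm Ψ) : MSymm (c • Ψ) := by
  intro σ idx
  show c * Ψ (idx ∘ σ) = c * Ψ idx
  rw [hΨ σ idx]

lemma MSymm_sum {k : ℕ} {ι : Type*} (s : Finset ι) (f : ι → MArr d k)
    (hf : ∀ i ∈ s, MSymm (f i)) : MSymm (∑ i ∈ s, f i) := by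
  intro σ idx
  rw [MArr_sum_apply, MArr_sum_apply]
  exact Finset.sum_congr rfl fun i hi => hf i hi σ idx

/-- extension of a permutation of `Fin k` to `Fin (k+1)` fixing the last index -/
private def extPerm {k : ℕ} (σ : Equiv.Perm (Fin k)) : Equiv.Perm (Fin (k + 1)) :=
  (finSuccEquiv' (Fin.last k)).trans (σ.optionCongr.trans (finSuccEquiv' (Fin.last k)).symm)

private lemma extPerm_castSucc {k : ℕ} (σ : Equiv.Perm (Fin k)) (i : Fin k) :
    extPerm σ (Fin.castSucc i) = Fin.castSucc (σ i) := by
  simp only [extPerm, Equiv.trans_apply]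
  rw [finSuccEquiv'_below (Fin.castSucc_lt_last i)]
  simp only [Equiv.optionCongr_apply, Option.map_some]
  rw [finSuccEquiv'_symm_some]
  exact Fin.succAbove_last_apply (σ i)

private lemma extPerm_last {k : ℕ} (σ : Equiv.Perm (Fin k)) :
    extPerm σ (Fin.last k) = Fin.last k := by
  simp only [extPerm, Equiv.trans_apply]
  rw [finSuccEquiv'_at]
  simp only [Equiv.optionCongr_apply, Option.map_none]
  exact finSuccEquiv'_symm_none _

lemma MSymm_Tann {k : ℕ} {Ψ : MArr d (k + 1)} (hΨ : MSymm Ψ) : MSymm (Tann t Ψ) := by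
  intro σ idx
  show (∑ j : Fin d, Ψ (Fin.snoc (idx ∘ σ) j) * t j) = ∑ j : Fin d, Ψ (Fin.snoc idx j) * t j
  refine Finset.sum_congr rfl fun j _ => ?_
  congr 1
  have key : (Fin.snoc idx j : Fin (k+1) → Fin d) ∘ (extPerm σ) = Fin.snoc (idx ∘ σ) j := by
    funext l
    induction l using Fin.lastCases with
    | last => rw [Function.comp_apply, extPerm_last, Fin.snoc_last, Fin.snoc_last]
    | cast l' =>
      rw [Function.comp_apply, extPerm_castSucc, Fin.snoc_castSucc, Fin.snoc_castSucc]
      rfl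
  rw [← key, hΨ (extPerm σ) (Fin.snoc idx j)]

lemma MSymm_Scre {k : ℕ} {Ψ : MArr d k} (hΨ : MSymm Ψ) : MSymm (Scre t Ψ) := by
  intro σ idx
  show (∑ j : Fin (k+1), Ψ ((idx ∘ σ) ∘ j.succAbove) * t ((idx ∘ σ) j))
      = ∑ j : Fin (k+1), Ψ (idx ∘ j.succAbove) * t (idx j)
  rw [← Equiv.sum_comp σ (fun j => Ψ (idx ∘ j.succAbove) * t (idx j))]
  refine Finset.sum_congr rfl fun j _ => ?_
  congr 1
  -- need : Ψ ((idx ∘ σ) ∘ j.succAbove) = Ψ (idx ∘ (σ j).succAbove)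
  set e : Equiv.Perm (Option (Fin k)) :=
    (finSuccEquiv' j).symm.trans ((σ : Equiv.Perm (Fin (k+1))).trans (finSuccEquiv' (σ j)))
    with he
  have henone : e none = none := by
    simp only [he, Equiv.trans_apply, finSuccEquiv'_symm_none, finSuccEquiv'_at]
  set τ := Equiv.removeNone e with hτ
  have key : ∀ i : Fin k, σ (j.succAbove i) = (σ j).succAbove (τ i) := by
    intro i
    have hne : σ (j.succAbove i) ≠ σ j := fun hcon =>
      Fin.succAbove_ne j i (σ.injective hcon)
    obtain ⟨z, hz⟩ := Fin.exists_succAbove_eq hne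
    have hes : e (some i) = some z := by
      simp only [he, Equiv.trans_apply, finSuccEquiv'_symm_some]
      rw [← hz, finSuccEquiv'_succAbove]
    have := Equiv.removeNone_some e ⟨z, hes⟩
    rw [hes] at this
    have hτi : τ i = z := (Option.some_injective _ this.symm).symm
    rw [hτi, hz]
  have hcomp : (idx ∘ σ) ∘ j.succAbove = (idx ∘ (σ j).succAbove) ∘ τ := by
    funext i
    simp only [Function.comp_apply]
    rw [key i]
  rw [hcomp, hΨ τ (idx ∘ (σ j).succAbove)]

lemma MSymm_Titer {k : ℕ} (p : ℕ) {Ψ : MArr d (k + p)} (hΨ : MSymm Ψ) :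
    MSymm (Titer t p Ψ) := by
  induction p with
  | zero => exact hΨ
  | succ p ih => exact ih (MSymm_Tann t hΨ)

lemma MSymm_Siter {k : ℕ} (p : ℕ) {Ψ : MArr d k} (hΨ : MSymm Ψ) :
    MSymm (Siter t p Ψ) := by
  induction p with
  | zero => exact hΨ
  | succ p ih => exact MSymm_Scre t ih

end Symm

section Norm

variable {d : ℕ} (t : Fin d → ℝ)

lemma tsq_nonneg : 0 ≤ tsq t := Finset.sum_nonneg fun i _ => sq_nonneg _

lemma tsq_pos (ht : t ≠ 0) : 0 < tsq t := by
  obtain ⟨i, hi⟩ := Function.ne_iff.mp ht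
  exact Finset.sum_pos' (fun j _ => sq_nonneg _)
    ⟨i, Finset.mem_univ i, (sq_nonneg (t i)).lt_of_ne (Ne.symm (pow_ne_zero 2 hi))⟩

lemma sum_sq_nonneg {k : ℕ} (Ψ : MArr d k) : 0 ≤ ∑ idx : Fin k → Fin d, Ψ idx ^ 2 :=
  Finset.sum_nonneg fun _ _ => sq_nonneg _

lemma sum_sq_Tann_le {k : ℕ} (Ψ : MArr d (k + 1)) :
    ∑ idx : Fin k → Fin d, (Tann t Ψ idx) ^ 2
      ≤ tsq t * ∑ idx : Fin (k + 1) → Fin d, Ψ idx ^ 2 := by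
  have step : ∀ idx : Fin k → Fin d,
      (Tann t Ψ idx) ^ 2 ≤ (∑ j : Fin d, Ψ (Fin.snoc idx j) ^ 2) * tsq t := by
    intro idx
    exact Finset.sum_mul_sq_le_sq_mul_sq Finset.univ (fun j => Ψ (Fin.snoc idx j)) t
  calc ∑ idx : Fin k → Fin d, (Tann t Ψ idx) ^ 2
      ≤ ∑ idx : Fin k → Fin d, (∑ j : Fin d, Ψ (Fin.snoc idx j) ^ 2) * tsq t :=
        Finset.sum_le_sum fun idx _ => step idx
    _ = (∑ idx : Fin k → Fin d, ∑ j : Fin d, Ψ (Fin.snoc idx j) ^ 2) * tsq t := by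
        rw [Finset.sum_mul]
    _ = (∑ idx : Fin (k + 1) → Fin d, Ψ idx ^ 2) * tsq t := by
        congr 1
        rw [← Finset.sum_product']
        refine Fintype.sum_bijective (fun x : (Fin k → Fin d) × Fin d =>
          (Fin.snocEquiv (fun _ => Fin d)) (x.2, x.1)) ?_ _ _ (fun x => rfl)
        exact ((Fin.snocEquiv (fun _ => Fin d)).bijective.comp
          (Equiv.prodComm _ _).bijective)
    _ = tsq t * ∑ idx : Fin (k + 1) → Fin d, Ψ idx ^ 2 := mul_comm _ _

lemma sum_sq_Scre_le {k : ℕ} (Ψ : MArr d k) :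
    ∑ idx : Fin (k + 1) → Fin d, (Scre t Ψ idx) ^ 2
      ≤ ((k : ℝ) + 1) ^ 2 * tsq t * ∑ idx : Fin k → Fin d, Ψ idx ^ 2 := by
  have step : ∀ idx : Fin (k + 1) → Fin d,
      (Scre t Ψ idx) ^ 2
        ≤ ((k : ℝ) + 1) * ∑ j : Fin (k + 1), Ψ (idx ∘ j.succAbove) ^ 2 * t (idx j) ^ 2 := by
    intro idx
    have := sq_sum_le_card_mul_sum_sq
      (s := (Finset.univ : Finset (Fin (k + 1))))
      (f := fun j => Ψ (idx ∘ j.succAbove) * t (idx j))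
    simpa [mul_pow, Scre] using this
  calc ∑ idx : Fin (k + 1) → Fin d, (Scre t Ψ idx) ^ 2
      ≤ ∑ idx : Fin (k + 1) → Fin d, ((k : ℝ) + 1)
          * ∑ j : Fin (k + 1), Ψ (idx ∘ j.succAbove) ^ 2 * t (idx j) ^ 2 :=
        Finset.sum_le_sum fun idx _ => step idx
    _ = ((k : ℝ) + 1) * ∑ j : Fin (k + 1), ∑ idx : Fin (k + 1) → Fin d,
          Ψ (idx ∘ j.succAbove) ^ 2 * t (idx j) ^ 2 := by
        rw [← Finset.mul_sum, Finset.sum_comm]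
    _ = ((k : ℝ) + 1) * ∑ j : Fin (k + 1),
          (tsq t * ∑ idx : Fin k → Fin d, Ψ idx ^ 2) := by
        congr 1
        refine Finset.sum_congr rfl fun j _ => ?_
        have key := Fintype.sum_equiv (Fin.insertNthEquiv (fun _ => Fin d) j)
          (fun x : Fin d × (Fin k → Fin d) => t x.1 ^ 2 * Ψ x.2 ^ 2)
          (fun idx : Fin (k+1) → Fin d => Ψ (idx ∘ j.succAbove) ^ 2 * t (idx j) ^ 2)
          (by
            intro x
            have h1 : ((Fin.insertNthEquiv (fun _ => Fin d) j) x) j = x.1 := by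
              simp [Fin.insertNthEquiv]
            have h2 : ((Fin.insertNthEquiv (fun _ => Fin d) j) x) ∘ j.succAbove = x.2 := by
              funext i
              simp [Fin.insertNthEquiv]
            rw [h1, h2]; ring)
        rw [← key, Fintype.sum_prod_type]
        dsimp only
        rw [← Fintype.sum_mul_sum]
        rfl
    _ = ((k : ℝ) + 1) ^ 2 * tsq t * ∑ idx : Fin k → Fin d, Ψ idx ^ 2 := by
        rw [Finset.sum_const, Finset.card_univ, Fintype.card_fin, nsmul_eq_mul]
        push_cast; ring

lemma arrNorm_nonneg {k : ℕ} (Ψ : MArr d k) : 0 ≤ arrNorm Ψ := Real.sqrt_nonneg _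

lemma arrNorm_castArr {a b : ℕ} (h : a = b) (Ψ : MArr d a) :
    arrNorm (castArr h Ψ) = arrNorm Ψ := by subst h; rfl

lemma arrNorm_smul {k : ℕ} (c : ℝ) (Ψ : MArr d k) :
    arrNorm (c • Ψ) = |c| * arrNorm Ψ := by
  rw [arrNorm, arrNorm]
  have : ∀ idx : Fin k → Fin d, ((c • Ψ) idx) ^ 2 = c ^ 2 * Ψ idx ^ 2 := by
    intro idx; rw [MArr_smul_apply]; ring
  rw [Finset.sum_congr rfl fun idx _ => this idx, ← Finset.mul_sum,
    Real.sqrt_mul (sq_nonneg c), Real.sqrt_sq_eq_abs]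

lemma arrNorm_eq_norm {k : ℕ} (Ψ : MArr d k) :
    arrNorm Ψ = ‖(WithLp.equiv 2 ((Fin k → Fin d) → ℝ)).symm Ψ‖ := by
  rw [EuclideanSpace.norm_eq, arrNorm]
  congr 1
  refine Finset.sum_congr rfl fun idx _ => ?_
  rw [Real.norm_eq_abs, sq_abs]
  rfl

lemma arrNorm_add_le {k : ℕ} (Ψ Φ : MArr d k) :
    arrNorm (Ψ + Φ) ≤ arrNorm Ψ + arrNorm Φ := by
  rw [arrNorm_eq_norm, arrNorm_eq_norm, arrNorm_eq_norm]
  exact norm_add_le _ _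

lemma arrNorm_sum_le {k : ℕ} {ι : Type*} (s : Finset ι) (f : ι → MArr d k) :
    arrNorm (∑ i ∈ s, f i) ≤ ∑ i ∈ s, arrNorm (f i) := by
  classical
  induction s using Finset.induction_on with
  | empty =>
    rw [Finset.sum_empty, Finset.sum_empty]
    have : arrNorm (0 : MArr d k) = 0 := by
      rw [arrNorm]
      have : ∀ idx : Fin k → Fin d, ((0 : MArr d k) idx) ^ 2 = 0 := fun idx => by
        show (0 : ℝ) ^ 2 = 0; ring
      rw [Finset.sum_congr rfl fun idx _ => this idx, Finset.sum_const, smul_zero,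
        Real.sqrt_zero]
    rw [this]
  | insert _ _ h ih =>
    rw [Finset.sum_insert h, Finset.sum_insert h]
    exact (arrNorm_add_le _ _).trans (by linarith)

lemma arrNorm_Tann_le {k : ℕ} (Ψ : MArr d (k + 1)) :
    arrNorm (Tann t Ψ) ≤ Real.sqrt (tsq t) * arrNorm Ψ := by
  rw [arrNorm, arrNorm, ← Real.sqrt_mul (tsq_nonneg t)]
  exact Real.sqrt_le_sqrt (sum_sq_Tann_le t Ψ)

lemma arrNorm_Scre_le {k : ℕ} (Ψ : MArr d k) :
    arrNorm (Scre t Ψ) ≤ ((k : ℝ) + 1) * (Real.sqrt (tsq t) * arrNorm Ψ) := by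
  rw [arrNorm, arrNorm, ← Real.sqrt_mul (tsq_nonneg t)]
  have h1 : ((k : ℝ) + 1) * Real.sqrt (tsq t * ∑ idx : Fin k → Fin d, Ψ idx ^ 2)
      = Real.sqrt (((k : ℝ) + 1) ^ 2 * (tsq t * ∑ idx : Fin k → Fin d, Ψ idx ^ 2)) := by
    rw [Real.sqrt_mul (sq_nonneg _), Real.sqrt_sq (by positivity)]
  rw [h1]
  refine Real.sqrt_le_sqrt ?_
  calc ∑ idx : Fin (k + 1) → Fin d, (Scre t Ψ idx) ^ 2
      ≤ ((k : ℝ) + 1) ^ 2 * tsq t * ∑ idx : Fin k → Fin d, Ψ idx ^ 2 := sum_sq_Scre_le t Ψ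
    _ = ((k : ℝ) + 1) ^ 2 * (tsq t * ∑ idx : Fin k → Fin d, Ψ idx ^ 2) := by ring

lemma arrNorm_Titer_le {k : ℕ} (p : ℕ) (Ψ : MArr d (k + p)) :
    arrNorm (Titer t p Ψ) ≤ Real.sqrt (tsq t) ^ p * arrNorm Ψ := by
  induction p with
  | zero => exact le_of_eq (by rw [pow_zero, one_mul]; rfl)
  | succ p ih =>
    calc arrNorm (Titer t p (Tann t Ψ))
        ≤ Real.sqrt (tsq t) ^ p * arrNorm (Tann t Ψ) := ih (Tann t Ψ)
      _ ≤ Real.sqrt (tsq t) ^ p * (Real.sqrt (tsq t) * arrNorm Ψ) := by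
          have := arrNorm_Tann_le t Ψ
          have hnn : (0:ℝ) ≤ Real.sqrt (tsq t) ^ p := by positivity
          nlinarith [arrNorm_nonneg (Tann t Ψ)]
      _ = Real.sqrt (tsq t) ^ (p + 1) * arrNorm Ψ := by ring

lemma arrNorm_Siter_le {k : ℕ} (p : ℕ) (Ψ : MArr d k) :
    arrNorm (Siter t p Ψ) ≤ ((k + p : ℕ) : ℝ) ^ p * (Real.sqrt (tsq t) ^ p * arrNorm Ψ) := by
  induction p with
  | zero => exact le_of_eq (by rw [pow_zero, pow_zero, one_mul, one_mul]; rfl)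
  | succ p ih =>
    have hs : (0:ℝ) ≤ Real.sqrt (tsq t) := Real.sqrt_nonneg _
    have hΨ : (0:ℝ) ≤ arrNorm Ψ := arrNorm_nonneg _
    calc arrNorm (Scre t (Siter t p Ψ))
        ≤ ((k + p : ℕ) + 1 : ℝ) * (Real.sqrt (tsq t) * arrNorm (Siter t p Ψ)) :=
          arrNorm_Scre_le t (Siter t p Ψ)
      _ ≤ ((k + p : ℕ) + 1 : ℝ)
          * (Real.sqrt (tsq t) * (((k + p : ℕ) : ℝ) ^ p * (Real.sqrt (tsq t) ^ p * arrNorm Ψ))) := by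
          have hc : (0:ℝ) ≤ ((k + p : ℕ) + 1 : ℝ) := by positivity
          exact mul_le_mul_of_nonneg_left (mul_le_mul_of_nonneg_left ih hs) hc
      _ ≤ ((k + (p+1) : ℕ) : ℝ) ^ (p + 1) * (Real.sqrt (tsq t) ^ (p + 1) * arrNorm Ψ) := by
          have h1 : ((k + p : ℕ) : ℝ) ≤ ((k + (p+1) : ℕ) : ℝ) := by push_cast; linarith
          have h2 : ((k + p : ℕ) + 1 : ℝ) = ((k + (p+1) : ℕ) : ℝ) := by push_cast; ring
          have h3 : ((k + p : ℕ) : ℝ) ^ p ≤ ((k + (p+1) : ℕ) : ℝ) ^ p := by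
            exact pow_le_pow_left₀ (by positivity) h1 p
          have h4 : (0:ℝ) ≤ ((k + (p+1) : ℕ) : ℝ) := by positivity
          calc ((k + p : ℕ) + 1 : ℝ)
              * (Real.sqrt (tsq t) * (((k + p : ℕ) : ℝ) ^ p * (Real.sqrt (tsq t) ^ p * arrNorm Ψ)))
              = (((k + p : ℕ) + 1 : ℝ) * ((k + p : ℕ) : ℝ) ^ p)
                  * (Real.sqrt (tsq t) ^ (p+1) * arrNorm Ψ) := by ring
            _ ≤ (((k + (p+1) : ℕ) : ℝ) * ((k + (p+1) : ℕ) : ℝ) ^ p)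
                  * (Real.sqrt (tsq t) ^ (p+1) * arrNorm Ψ) := by
                have : (0:ℝ) ≤ Real.sqrt (tsq t) ^ (p+1) * arrNorm Ψ := by positivity
                refine mul_le_mul_of_nonneg_right ?_ this
                rw [h2]
                exact mul_le_mul_of_nonneg_left h3 h4
            _ = ((k + (p+1) : ℕ) : ℝ) ^ (p + 1) * (Real.sqrt (tsq t) ^ (p + 1) * arrNorm Ψ) := by
                rw [← pow_succ']

end Norm

section Assembly

variable {d : ℕ}

private lemma scalar_tel (t : Fin d → ℝ) (ht : tsq t ≠ 0) (q : ℕ) :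
    (-1 : ℝ) ^ (q + 1 + 1) * ((Nat.factorial (q + 1) : ℝ))⁻¹ * (tsq t ^ (q + 1))⁻¹
        * (((q : ℕ) : ℝ) + 1) * tsq t
      = (-1 : ℝ) ^ q * ((Nat.factorial q : ℝ))⁻¹ * (tsq t ^ q)⁻¹ := by
  have hfac : ((Nat.factorial (q + 1) : ℕ) : ℝ) = (((q : ℕ) : ℝ) + 1) * (Nat.factorial q : ℝ) := by
    rw [Nat.factorial_succ]; push_cast; ring
  have hfq : ((Nat.factorial q : ℕ) : ℝ) ≠ 0 := by
    exact_mod_cast Nat.factorial_ne_zero q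
  have hq1 : (((q : ℕ) : ℝ) + 1) ≠ 0 := by positivity
  rw [hfac, pow_succ (tsq t), pow_succ (-1 : ℝ) (q + 1), pow_succ (-1 : ℝ) q]
  field_simp

private lemma scalar_neg (t : Fin d → ℝ) (q : ℕ) :
    (-1 : ℝ) ^ (q + 1 + 1) * ((Nat.factorial (q + 1) : ℝ))⁻¹ * (tsq t ^ (q + 1))⁻¹
      = -((-1 : ℝ) ^ (q + 1) * ((Nat.factorial (q + 1) : ℝ))⁻¹ * (tsq t ^ (q + 1))⁻¹) := by
  rw [pow_succ (-1 : ℝ) (q + 1)]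
  ring

private lemma term_bound (t : Fin d → ℝ) (ht : t ≠ 0) (m : ℕ) (F : MArr d m) (p : ℕ)
    (hp1 : 1 ≤ p) (hpn : p ≤ m + 1)
    (h1 : (m + 1 - p) + p = m + 1) (h2 : m = (m + 1 - p) + (p - 1)) :
    arrNorm (((-1 : ℝ) ^ (p + 1) * ((Nat.factorial p : ℝ))⁻¹ * (tsq t ^ p)⁻¹) •
        castArr h1 (Siter t p (Titer (k := m + 1 - p) t (p - 1) (castArr h2 F))))
      ≤ ((m + 1 : ℕ) : ℝ) ^ (m + 1) * (Real.sqrt (tsq t))⁻¹ * arrNorm F := by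
  have htp : 0 < tsq t := tsq_pos t ht
  have hs0 : 0 < Real.sqrt (tsq t) := Real.sqrt_pos.mpr htp
  set s : ℝ := Real.sqrt (tsq t) with hs
  rw [arrNorm_smul, arrNorm_castArr]
  have habs : |(-1 : ℝ) ^ (p + 1) * ((Nat.factorial p : ℝ))⁻¹ * (tsq t ^ p)⁻¹|
      = ((Nat.factorial p : ℝ))⁻¹ * (tsq t ^ p)⁻¹ := by
    rw [abs_mul, abs_mul, abs_pow, abs_neg, abs_one, one_pow, one_mul, abs_inv, abs_inv,
      Nat.abs_cast, abs_of_pos (pow_pos htp p)]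
  have habs' : |(-1 : ℝ) ^ (p + 1) * ((Nat.factorial p : ℝ))⁻¹ * (tsq t ^ p)⁻¹|
      ≤ (tsq t ^ p)⁻¹ := by
    rw [habs]
    have h1' : ((Nat.factorial p : ℕ) : ℝ)⁻¹ ≤ 1 := by
      rw [inv_le_one_iff₀]
      right
      exact_mod_cast Nat.one_le_iff_ne_zero.mpr (Nat.factorial_ne_zero p)
    calc ((Nat.factorial p : ℝ))⁻¹ * (tsq t ^ p)⁻¹ ≤ 1 * (tsq t ^ p)⁻¹ := by
          exact mul_le_mul_of_nonneg_right h1' (by positivity)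
      _ = (tsq t ^ p)⁻¹ := one_mul _
  have hT : arrNorm (Titer (k := m + 1 - p) t (p - 1) (castArr h2 F))
      ≤ s ^ (p - 1) * arrNorm F := by
    have := arrNorm_Titer_le (k := m + 1 - p) t (p - 1) (castArr h2 F)
    rwa [arrNorm_castArr] at this
  have hS : arrNorm (Siter t p (Titer (k := m + 1 - p) t (p - 1) (castArr h2 F)))
      ≤ ((m + 1 : ℕ) : ℝ) ^ p * (s ^ p * (s ^ (p - 1) * arrNorm F)) := by
    refine (arrNorm_Siter_le t p _).trans ?_
    have hcc : (((m + 1 - p) + p : ℕ) : ℝ) = ((m + 1 : ℕ) : ℝ) := by rw [h1]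
    rw [hcc]
    refine mul_le_mul_of_nonneg_left ?_ (by positivity)
    exact mul_le_mul_of_nonneg_left hT (by positivity)
  calc |(-1 : ℝ) ^ (p + 1) * ((Nat.factorial p : ℝ))⁻¹ * (tsq t ^ p)⁻¹|
        * arrNorm (Siter t p (Titer (k := m + 1 - p) t (p - 1) (castArr h2 F)))
      ≤ (tsq t ^ p)⁻¹ * (((m + 1 : ℕ) : ℝ) ^ p * (s ^ p * (s ^ (p - 1) * arrNorm F))) := by
        exact mul_le_mul habs' hS (arrNorm_nonneg _) (by positivity)
    _ = ((m + 1 : ℕ) : ℝ) ^ p * (s⁻¹ * arrNorm F) := by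
        have hts : tsq t = s ^ 2 := (Real.sq_sqrt (tsq_nonneg t)).symm
        have hsne : s ≠ 0 := ne_of_gt hs0
        rw [hts, ← pow_mul]
        have hexp : s ^ p * (s ^ (p - 1) * arrNorm F) = s ^ (2 * p - 1) * arrNorm F := by
          rw [← mul_assoc, ← pow_add]
          congr 2
          omega
        rw [hexp]
        have h2p : s ^ (2 * p) = s ^ (2 * p - 1) * s := by
          rw [← pow_succ]
          congr 1
          omega
        rw [h2p]
        field_simp
    _ ≤ ((m + 1 : ℕ) : ℝ) ^ (m + 1) * (s⁻¹ * arrNorm F) := by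
        refine mul_le_mul_of_nonneg_right ?_
          (mul_nonneg (inv_nonneg.mpr hs0.le) (arrNorm_nonneg F))
        refine pow_le_pow_right₀ ?_ hpn
        have : (1 : ℝ) ≤ ((m + 1 : ℕ) : ℝ) := by exact_mod_cast Nat.one_le_iff_ne_zero.mpr (by omega)
        exact this
    _ = ((m + 1 : ℕ) : ℝ) ^ (m + 1) * s⁻¹ * arrNorm F := by ring

end Assembly

section Tele
variable {d : ℕ}

private lemma telescope_term (t : Fin d → ℝ) (ht : tsq t ≠ 0) (m : ℕ) (F : MArr d (m + 1 - 1))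
    (g : ℕ → MArr d (m + 1 - 1))
    (hg0 : ∀ q, m < q → g q = 0)
    (hgpos : ∀ q (h : q ≤ m), g q
      = ((-1 : ℝ) ^ q * ((Nat.factorial q : ℝ))⁻¹ * (tsq t ^ q)⁻¹) •
          castArr (show (m + 1 - 1 - q) + q = m + 1 - 1 by omega)
            (Siter t q (Titer (k := m + 1 - 1 - q) t q
              (castArr (show m + 1 - 1 = (m + 1 - 1 - q) + q by omega) F))))
    (p : ℕ) (hp1 : 1 ≤ p) (hp2 : p ≤ m + 1)
    (h1 : (m + 1 - p) + p = m + 1) (h2 : m + 1 - 1 = (m + 1 - p) + (p - 1))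
    (pfc : m + 1 = (m + 1 - 1) + 1) :
    Tann (k := m + 1 - 1) t (castArr pfc
      (((-1 : ℝ) ^ (p + 1) * ((Nat.factorial p : ℝ))⁻¹ * (tsq t ^ p)⁻¹) •
        castArr h1 (Siter t p (Titer (k := m + 1 - p) t (p - 1) (castArr h2 F)))))
    = g (p - 1) - g p := by
  obtain ⟨q, rfl⟩ : ∃ q, p = q + 1 := ⟨p - 1, by omega⟩
  have hq : q ≤ m := by omega
  rw [castArr_smul, Tann_smul, castArr_castArr]
  simp only [Nat.add_sub_cancel]
  rcases Nat.lt_or_ge q m with hlt | hge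
  · -- case q < m
    obtain ⟨k, hk⟩ : ∃ k, m - q = k + 1 := ⟨m - (q + 1), by omega⟩
    have he2 : m + 1 - 1 = (k + 1) + q := by omega
    set G : MArr d ((k + 1) + q) := castArr he2 F with hG
    set V : MArr d (k + 1) := Titer (k := k + 1) t q G with hV
    have hk1 : k + 1 = m + 1 - (q + 1) := by omega
    have Ek : (k + 1) + (q + 1) = (m + 1 - (q + 1)) + (q + 1) := by omega
    have Pm : (k + 1) + q = m + 1 - 1 := by omega
    have hh : k + (q + 1) = (k + 1) + q := by omega
    have claimW : Titer (k := m + 1 - (q + 1)) t (q + 1 - 1) (castArr h2 F)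
        = castArr hk1 V :=
      Titer_castArr t q (show (k + 1) + q = (m + 1 - (q + 1)) + q by omega) hk1 G
    have key : Tann (k := m + 1 - 1) t (castArr (h1.trans pfc)
          (Siter t (q + 1) (Titer (k := m + 1 - (q + 1)) t (q + 1 - 1) (castArr h2 F))))
        = (((q : ℕ) : ℝ) + 1) • (tsq t • castArr Pm (Siter t q V))
          + castArr (hh.trans Pm) (Siter t (q + 1) (Tann t V)) := by
      rw [claimW, Siter_castArr t (q + 1) hk1 Ek V, castArr_castArr,
        Tann_castArr t (Ek.trans (h1.trans pfc)) Pm, TS_iter t q V hh,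
        castArr_add, castArr_smul, castArr_smul, castArr_castArr]
    rw [key, smul_add, smul_smul, smul_smul, scalar_tel t ht q, scalar_neg t q, neg_smul,
      hgpos q hq, hgpos (q + 1) (by omega), sub_eq_add_neg]
    congr 1
    · -- first summand
      congr 1
      have claimW2 : Titer (k := m + 1 - 1 - q) t q
            (castArr (show m + 1 - 1 = (m + 1 - 1 - q) + q by omega) F)
          = castArr (show k + 1 = m + 1 - 1 - q by omega) V :=
        Titer_castArr t q (show (k + 1) + q = (m + 1 - 1 - q) + q by omega)
          (show k + 1 = m + 1 - 1 - q by omega) G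
      rw [claimW2, Siter_castArr t q (show k + 1 = m + 1 - 1 - q by omega)
        (show (k + 1) + q = (m + 1 - 1 - q) + q by omega) V, castArr_castArr]
    · -- second summand
      congr 1
      have hTV : Titer (k := k) t (q + 1)
            (castArr (show m + 1 - 1 = k + (q + 1) by omega) F) = Tann t V :=
        (Titer_comm t q (castArr (show m + 1 - 1 = k + (q + 1) by omega) F)
          (show k + (q + 1) = (k + 1) + q by omega)).trans rfl
      have claimW3 : Titer (k := m + 1 - 1 - (q + 1)) t (q + 1)
            (castArr (show m + 1 - 1 = (m + 1 - 1 - (q + 1)) + (q + 1) by omega) F)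
          = castArr (show k = m + 1 - 1 - (q + 1) by omega) (Tann t V) := by
        refine Eq.trans (Titer_castArr t (q + 1)
          (show k + (q + 1) = (m + 1 - 1 - (q + 1)) + (q + 1) by omega)
          (show k = m + 1 - 1 - (q + 1) by omega)
          (castArr (show m + 1 - 1 = k + (q + 1) by omega) F)) ?_
        rw [hTV]
      rw [claimW3, Siter_castArr t (q + 1) (show k = m + 1 - 1 - (q + 1) by omega)
        (show k + (q + 1) = (m + 1 - 1 - (q + 1)) + (q + 1) by omega) (Tann t V),
        castArr_castArr]
  · -- case q = m
    have hqm : q = m := by omega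
    subst hqm
    have e0 : q + 1 - 1 - q = 0 := by omega
    have e0' : q + 1 - (q + 1) = 0 := by omega
    rw [hg0 (q + 1) (by omega), sub_zero, hgpos q hq]
    set Φ0 : MArr d 0 := Titer (k := 0) t q (castArr (show q + 1 - 1 = 0 + q by omega) F)
      with hΦ0
    have hz : (0 : ℕ) = q + 1 - (q + 1) := by omega
    have EkB : 0 + (q + 1) = (q + 1 - (q + 1)) + (q + 1) := by omega
    have PmB : 0 + q = q + 1 - 1 := by omega
    have claimW : Titer (k := q + 1 - (q + 1)) t (q + 1 - 1) (castArr h2 F)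
        = castArr hz Φ0 :=
      Titer_castArr t q (show 0 + q = (q + 1 - (q + 1)) + q by omega) hz
        (castArr (show q + 1 - 1 = 0 + q by omega) F)
    have key : Tann (k := q + 1 - 1) t (castArr (h1.trans pfc)
          (Siter t (q + 1) (Titer (k := q + 1 - (q + 1)) t (q + 1 - 1) (castArr h2 F))))
        = (((q : ℕ) : ℝ) + 1) • (tsq t • castArr PmB (Siter t q Φ0)) := by
      rw [claimW, Siter_castArr t (q + 1) hz EkB Φ0, castArr_castArr,
        Tann_castArr t (EkB.trans (h1.trans pfc)) PmB, TS_iter0 t q Φ0,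
        castArr_smul, castArr_smul]
    rw [key, smul_smul, smul_smul, scalar_tel t ht q]
    congr 1
    have claimW2 : Titer (k := q + 1 - 1 - q) t q
          (castArr (show q + 1 - 1 = (q + 1 - 1 - q) + q by omega) F)
        = castArr (show (0 : ℕ) = q + 1 - 1 - q by omega) Φ0 :=
      Titer_castArr t q (show 0 + q = (q + 1 - 1 - q) + q by omega)
        (show (0 : ℕ) = q + 1 - 1 - q by omega)
        (castArr (show q + 1 - 1 = 0 + q by omega) F)
    rw [claimW2, Siter_castArr t q (show (0 : ℕ) = q + 1 - 1 - q by omega)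
      (show 0 + q = (q + 1 - 1 - q) + q by omega) Φ0, castArr_castArr]

end Tele

/-- subsection 4.1, Proposition 4.1 / `C2`: the creation/annihilation
operators on symmetric arrays satisfy `T_{k+1}S_k = ‖t‖² I + S_{k-1}T_k`; the operator
`R_{n-1}` solves the underdetermined system `T_n Ψ = F` and satisfies
`‖R_{n-1}‖ ≤ C_n ‖t‖⁻¹` with `C` depending only on `n` and `d`. -/
theorem statement17 (d n : ℕ) (hd : 1 ≤ d) (hn : 1 ≤ n) :
    -- (i) the commutation relation on `M_k`, `k ≥ 1`
    (∀ t : Fin d → ℝ, t ≠ 0 → ∀ k : ℕ, ∀ Ψ : MArr d (k + 1), MSymm Ψ →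
      Tann t (Scre t Ψ) = tsq t • Ψ + Scre t (Tann t Ψ)) ∧
    -- (ii) `R` produces a (symmetric) solution of `T_n Ψ_n = F`
    (∀ t : Fin d → ℝ, t ≠ 0 → ∀ F : MArr d (n - 1), MSymm F →
      MSymm (Rop n t F) ∧
      Tann (k := n - 1) t (castArr (show n = (n - 1) + 1 by omega) (Rop n t F)) = F) ∧
    -- (iii) the norm bound, with a constant depending only on `n` and `d`
    (∃ C : ℝ, ∀ t : Fin d → ℝ, t ≠ 0 → ∀ F : MArr d (n - 1), MSymm F →
      arrNorm (Rop n t F) ≤ C * (Real.sqrt (tsq t))⁻¹ * arrNorm F) := by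
  obtain ⟨m, rfl⟩ : ∃ m, n = m + 1 := ⟨n - 1, by omega⟩
  refine ⟨fun t _ k Ψ _ => comm_TS t Ψ, ?_, ?_⟩
  · intro t ht F hF
    have htne : tsq t ≠ 0 := ne_of_gt (tsq_pos t ht)
    constructor
    · unfold Rop
      refine MSymm_sum _ _ fun p _ => ?_
      exact MSymm_smul _
        (MSymm_castArr _ (MSymm_Siter t _ (MSymm_Titer t _ (MSymm_castArr _ hF))))
    · classical
      set g : ℕ → MArr d (m + 1 - 1) := fun q =>
        if h : q ≤ m then
          ((-1 : ℝ) ^ q * ((Nat.factorial q : ℝ))⁻¹ * (tsq t ^ q)⁻¹) •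
            castArr (show (m + 1 - 1 - q) + q = m + 1 - 1 by omega)
              (Siter t q (Titer (k := m + 1 - 1 - q) t q
                (castArr (show m + 1 - 1 = (m + 1 - 1 - q) + q by omega) F)))
        else 0 with hgdef
      have hg0 : ∀ q, m < q → g q = 0 := fun q h => dif_neg (by omega)
      have hgpos : ∀ q (h : q ≤ m), g q
          = ((-1 : ℝ) ^ q * ((Nat.factorial q : ℝ))⁻¹ * (tsq t ^ q)⁻¹) •
              castArr (show (m + 1 - 1 - q) + q = m + 1 - 1 by omega)
                (Siter t q (Titer (k := m + 1 - 1 - q) t q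
                  (castArr (show m + 1 - 1 = (m + 1 - 1 - q) + q by omega) F))) :=
        fun q h => dif_pos h
      unfold Rop
      rw [castArr_sum, Tann_sum]
      refine Eq.trans (Finset.sum_congr rfl
        (fun (p : {x // x ∈ Finset.Icc 1 (m + 1)}) _ =>
          telescope_term t htne m F g hg0 hgpos (↑p : ℕ)
            (Finset.mem_Icc.mp p.2).1 (Finset.mem_Icc.mp p.2).2 _ _ _)) ?_
      refine Eq.trans (Finset.sum_bij'
        (t := Finset.range (m + 1)) (g := fun q => g q - g (q + 1)) (i := fun (p : {x // x ∈ Finset.Icc 1 (m + 1)}) _ => (↑p : ℕ) - 1)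
        (j := fun q hq => (⟨q + 1, by
          rw [Finset.mem_range] at hq
          exact Finset.mem_Icc.mpr ⟨by omega, by omega⟩⟩ : {x // x ∈ Finset.Icc 1 (m + 1)}))
        (hi := fun p _ => by
          have := Finset.mem_Icc.mp p.2
          show (↑p : ℕ) - 1 ∈ Finset.range (m + 1)
          exact Finset.mem_range.mpr (by omega))
        (hj := fun q hq => Finset.mem_attach _ _)
        (left_neg := fun p hp => by
          have := Finset.mem_Icc.mp p.2
          exact Subtype.ext (by show (↑p : ℕ) - 1 + 1 = ↑p; omega))
        (right_neg := fun q hq => rfl)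
        (h := fun p hp => by
          have := Finset.mem_Icc.mp p.2
          show _ = g ((↑p : ℕ) - 1) - g ((↑p : ℕ) - 1 + 1)
          rw [show (↑p : ℕ) - 1 + 1 = (↑p : ℕ) by omega])) ?_
      rw [Finset.sum_range_sub' g (m + 1), hg0 (m + 1) (by omega), sub_zero,
        hgpos 0 (by omega)]
      have hone : ((-1 : ℝ)) ^ 0 * ((Nat.factorial 0 : ℝ))⁻¹ * (tsq t ^ 0)⁻¹ = 1 := by
        norm_num
      rw [hone]
      exact one_smul ℝ F
  · refine ⟨((m + 1 : ℕ) : ℝ) * ((m + 1 : ℕ) : ℝ) ^ (m + 1), ?_⟩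
    intro t ht F hF
    have hs0 : 0 < Real.sqrt (tsq t) := Real.sqrt_pos.mpr (tsq_pos t ht)
    calc arrNorm (Rop (m + 1) t F)
        ≤ ∑ p ∈ (Finset.Icc 1 (m + 1)).attach,
            arrNorm (((-1 : ℝ) ^ ((p : ℕ) + 1) * ((Nat.factorial (p : ℕ) : ℝ))⁻¹
                * (tsq t ^ (p : ℕ))⁻¹) •
              castArr (show ((m + 1) - (p : ℕ)) + (p : ℕ) = m + 1 by
                  have := Finset.mem_Icc.mp p.2; omega)
                (Siter t (p : ℕ)
                  (Titer (k := (m + 1) - (p : ℕ)) t ((p : ℕ) - 1)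
                    (castArr (show (m + 1) - 1 = ((m + 1) - (p : ℕ)) + ((p : ℕ) - 1) by
                        have := Finset.mem_Icc.mp p.2; omega) F)))) := by
          unfold Rop
          exact arrNorm_sum_le _ _
      _ ≤ ∑ _p ∈ (Finset.Icc 1 (m + 1)).attach,
            ((m + 1 : ℕ) : ℝ) ^ (m + 1) * (Real.sqrt (tsq t))⁻¹ * arrNorm F :=
          Finset.sum_le_sum fun p _ =>
            term_bound t ht m F (↑p : ℕ)
              (Finset.mem_Icc.mp p.2).1 (Finset.mem_Icc.mp p.2).2 _ _
      _ = ((m + 1 : ℕ) : ℝ) * ((m + 1 : ℕ) : ℝ) ^ (m + 1)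
            * (Real.sqrt (tsq t))⁻¹ * arrNorm F := by
          rw [Finset.sum_const, Finset.card_attach, Nat.card_Icc]
          have : m + 1 + 1 - 1 = m + 1 := by omega
          rw [this, nsmul_eq_mul]
          ring

end
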